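/- The 3-adic valuation of the discriminant of the polynomial 7x⁴ + 79x³ + 311x² + 497x + 277 equals 2, and its 13-adic valuation equals 3. -/

import Mathlib

open Polynomial

/-- The Sylvester matrix of two polynomials `p` and `q`. -/
noncomputable def sylvester {R : Type*} [CommRing R] (p q : Polynomial R) :
    Matrix (Fin (p.natDegree + q.natDegree)) (Fin (p.natDegree + q.natDegree)) R :=
  fun i j =>
    if (i : ℕ) < q.natDegree then
      if (i : ℕ) ≤ (j : ℕ) ∧ (j : ℕ) ≤ (i : ℕ) + p.natDegree then
        p.coeff (p.natDegree + (i : ℕ) - (j : ℕ)) else 0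
    else
      if (i : ℕ) - q.natDegree ≤ (j : ℕ) ∧ (j : ℕ) ≤ ((i : ℕ) - q.natDegree) + q.natDegree then
        q.coeff (q.natDegree + ((i : ℕ) - q.natDegree) - (j : ℕ)) else 0

/-- The resultant of two integer polynomials. -/
noncomputable def resultant (p q : Polynomial ℤ) : ℤ :=
  (_root_.sylvester p q).det

/-- The discriminant of an integer polynomial:
`disc p = (-1)^(n(n-1)/2) · Res(p, p') / lc(p)` (the division is exact). -/
noncomputable def disc (p : Polynomial ℤ) : ℤ :=
  ((-1) ^ (p.natDegree * (p.natDegree - 1) / 2) * _root_.resultant p (derivative p)) / p.leadingCoeff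

/- ### Auxiliary machinery -/

section Aux

set_option maxRecDepth 3000

private noncomputable def Paux : Polynomial ℤ := 7*X^4 + 79*X^3 + 311*X^2 + 497*X + 277

private lemma hP : Paux.natDegree = 4 := by unfold Paux; compute_degree!

private lemma hQ : derivative Paux = 28*X^3 + 237*X^2 + 622*X + 497 := by
  unfold Paux; simp [derivative_add, derivative_mul]; ring

private lemma hQd : (derivative Paux).natDegree = 3 := by rw [hQ]; compute_degree!

private lemma hc0 : Paux.coeff 0 = 277 := by
  unfold Paux; simp [coeff_add, coeff_X_pow, coeff_ofNat_mul, coeff_X]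
private lemma hc1 : Paux.coeff 1 = 497 := by
  unfold Paux; simp [coeff_add, coeff_X_pow, coeff_ofNat_mul, coeff_X]
private lemma hc2 : Paux.coeff 2 = 311 := by
  unfold Paux; simp [coeff_add, coeff_X_pow, coeff_ofNat_mul, coeff_X]
private lemma hc3 : Paux.coeff 3 = 79 := by
  unfold Paux; simp [coeff_add, coeff_X_pow, coeff_ofNat_mul, coeff_X]
private lemma hc4 : Paux.coeff 4 = 7 := by
  unfold Paux; simp [coeff_add, coeff_X_pow, coeff_ofNat_mul, coeff_X]
private lemma hd0 : (derivative Paux).coeff 0 = 497 := by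
  rw [hQ]; simp [coeff_add, coeff_X_pow, coeff_ofNat_mul, coeff_X]
private lemma hd1 : (derivative Paux).coeff 1 = 622 := by
  rw [hQ]; simp [coeff_add, coeff_X_pow, coeff_ofNat_mul, coeff_X]
private lemma hd2 : (derivative Paux).coeff 2 = 237 := by
  rw [hQ]; simp [coeff_add, coeff_X_pow, coeff_ofNat_mul, coeff_X]
private lemma hd3 : (derivative Paux).coeff 3 = 28 := by
  rw [hQ]; simp [coeff_add, coeff_X_pow, coeff_ofNat_mul, coeff_X]

private def Msyl : Matrix (Fin 7) (Fin 7) ℤ :=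
  !![7, 79, 311, 497, 277, 0, 0;
     0, 7, 79, 311, 497, 277, 0;
     0, 0, 7, 79, 311, 497, 277;
     28, 237, 622, 497, 0, 0, 0;
     0, 28, 237, 622, 497, 0, 0;
     0, 0, 28, 237, 622, 497, 0;
     0, 0, 0, 28, 237, 622, 497]

private def Lm : Matrix (Fin 7) (Fin 7) ℤ :=
  !![1, 0, 0, 0, 0, 0, 0;
     0, 1, 0, 0, 0, 0, 0;
     0, 0, 1, 0, 0, 0, 0;
     -196, 553, -1887, 49, 0, 0, 0;
     52836, 51523, -57286, -13209, -50149, 0, 0;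
     -802004, -2245895, 4626, 200501, 1127173, 1248748, 0;
     -86352, -588472, -973645, 21588, 208027, 622505, 542642]

private def Um : Matrix (Fin 7) (Fin 7) ℤ :=
  !![7, 79, 311, 497, 277, 0, 0;
     0, 7, 79, 311, 497, 277, 0;
     0, 0, 7, 79, 311, 497, 277;
     0, 0, 0, -50149, -366308, -784658, -522699;
     0, 0, 0, 0, -2497496, -14199271, -15868222;
     0, 0, 0, 0, 0, 813963, 1281402;
     0, 0, 0, 0, 0, 0, -6591]

set_option maxHeartbeats 1000000 in
private lemma hLM : Lm * Msyl = Um := by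
  ext i j
  fin_cases i <;> fin_cases j <;> decide

private lemma hLdet : Lm.det = -1665123951271489016 := by
  rw [Matrix.det_of_lowerTriangular Lm (by
    intro i j h
    rw [OrderDual.toDual_lt_toDual] at h
    fin_cases i <;> fin_cases j <;> simp_all [Lm, Fin.lt_def])]
  simp [Fin.prod_univ_succ, Lm]

private lemma hUdet : Um.det = -230471471219438066193576 := by
  rw [Matrix.det_of_upperTriangular (by
    intro i j h
    fin_cases i <;> fin_cases j <;> simp_all [Um, Fin.lt_def])]
  simp [Fin.prod_univ_succ, Um]

private lemma hMdet : Msyl.det = 138411 := by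
  have h : Lm.det * Msyl.det = Um.det := by rw [← Matrix.det_mul, hLM]
  rw [hLdet, hUdet] at h
  exact mul_left_cancel₀ (show (-1665123951271489016:ℤ) ≠ 0 by norm_num)
    (h.trans (by norm_num))

set_option maxHeartbeats 2000000 in
private lemma hsyl : _root_.resultant Paux (derivative Paux) = 138411 := by
  have h7 : Paux.natDegree + (derivative Paux).natDegree = 7 := by rw [hP, hQd]
  unfold _root_.resultant
  rw [← Matrix.det_reindex_self (finCongr h7) (_root_.sylvester Paux (derivative Paux))]
  have hM : Matrix.reindex (finCongr h7) (finCongr h7) (_root_.sylvester Paux (derivative Paux))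
      = Msyl := by
    ext i j
    fin_cases i <;> fin_cases j <;>
      · norm_num [Msyl, Matrix.reindex_apply, finCongr_apply, Fin.coe_cast, _root_.sylvester,
          hP, hQd, hc0, hc1, hc2, hc3, hc4, hd0, hd1, hd2, hd3,
          show ((0:Fin 7):ℕ) = 0 from rfl, show ((1:Fin 7):ℕ) = 1 from rfl,
          show ((2:Fin 7):ℕ) = 2 from rfl, show ((3:Fin 7):ℕ) = 3 from rfl,
          show ((4:Fin 7):ℕ) = 4 from rfl, show ((5:Fin 7):ℕ) = 5 from rfl,
          show ((6:Fin 7):ℕ) = 6 from rfl]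
  rw [hM, hMdet]

private lemma hlead : Paux.leadingCoeff = 7 := by
  rw [Polynomial.leadingCoeff, hP, hc4]

private lemma hdisc : disc Paux = 19773 := by
  unfold disc
  rw [hP, hsyl, hlead]
  norm_num

private lemma pv (p n k m : ℕ) (hp : p.Prime) (h : n = p^k * m) (hm : ¬ p ∣ m)
    (hm0 : m ≠ 0) : padicValNat p n = k := by
  haveI := Fact.mk hp
  rw [h, padicValNat.mul (pow_ne_zero _ hp.ne_zero) hm0, padicValNat.prime_pow,
    padicValNat.eq_zero_of_not_dvd hm, add_zero]

end Aux

/-- The discriminant of `7x⁴ + 79x³ + 311x² + 497x + 277` has `3`-adic valuation `2`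
and `13`-adic valuation `3`. -/
theorem disc_valuations_pR :
    padicValInt 3 (disc (7*X^4 + 79*X^3 + 311*X^2 + 497*X + 277 : Polynomial ℤ)) = 2 ∧
    padicValInt 13 (disc (7*X^4 + 79*X^3 + 311*X^2 + 497*X + 277 : Polynomial ℤ)) = 3 := by
  have h : disc (7*X^4 + 79*X^3 + 311*X^2 + 497*X + 277 : Polynomial ℤ) = 19773 := hdisc
  rw [h]
  constructor
  · unfold padicValInt
    norm_num
    exact pv 3 19773 2 2197 (by norm_num) (by norm_num) (by norm_num) (by norm_num)
  · unfold padicValInt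
    norm_num
    exact pv 13 19773 3 9 (by norm_num) (by norm_num) (by norm_num) (by norm_num)
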